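/- Suppose job j of size p_j with p_j/s_{i'} ≤ OPT₂ is assigned by M_PPR to a machine i with s_i ≥ 2·s_{i'}, while a slower machine i' satisfies C_i(j) − C_{i'}(j) ≥ 2·OPT₂ − p_j/s_i. Then the cost of job j on machine i' is at most its cost on machine i, i.e., C_{i'}(j) + p_j/s_{i'} + ρ_{i'}(j) ≤ C_i(j) + (1/2)·(p_j/s_i) + ρ_i(j) ≤ C_i(j) + p_j/s_i + ρ_i(j). -/
import Mathlib

/-- Core algebraic step of the `difference-of-C` lemma: under the stated
conditions, the cost of job `j` on the slower machine `i'` is at most its cost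
on machine `i`. -/
theorem stmt_12 (si si' p OPT2 Ci Ci' ρi ρi' : ℝ)
    (hsi' : 0 < si') (hsi : 2 * si' ≤ si) (hp : 0 ≤ p)
    (hproc : p / si' ≤ OPT2)
    (hgap : 2 * OPT2 - p / si ≤ Ci - Ci')
    (hprice : ρi' - ρi ≤ 1 / 2 * (Ci - Ci')) :
    Ci' + p / si' + ρi' ≤ Ci + 1 / 2 * (p / si) + ρi ∧
    Ci + 1 / 2 * (p / si) + ρi ≤ Ci + p / si + ρi := by
  have hsipos : 0 < si := by linarith
  have h0 : 0 ≤ p / si := div_nonneg hp hsipos.le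
  constructor <;> linarith
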